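/- Let 𝕍 be a persistence module over ℝ^n satisfying hypothesis (⋆) with respect to C̄. Let L, L′ ⊆ ℝ^n be lines with positive slope such that L ∼_C̄ L′. Then for all u ≺ v with u, v ∈ L and {c ∈ C̄ : c ≼ u} nonempty, one has ρ(u, v) = ρ(push_{L′}(ū), push_{L′}(v̄)). -/

import Mathlib

/-- `L ⊆ ℝⁿ` is a line with positive slope: `L = {u₀ + t·m : t ∈ ℝ}` with all
coordinates of the velocity vector `m` positive. -/
def PosLine {n : ℕ} (L : Set (Fin n → ℝ)) : Prop :=
  ∃ u₀ m : Fin n → ℝ, (∀ i, 0 < m i) ∧ L = {x | ∃ t : ℝ, x = u₀ + t • m}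

/-- For `∅ ≠ A ⊆ {1,…,n}`, the open face
`S_A(u) = {x : x_i = u_i for i ∈ A, x_j > u_j for j ∉ A}` of the boundary of
the positive cone of `u`. -/
def SFace {n : ℕ} (A : Finset (Fin n)) (u : Fin n → ℝ) : Set (Fin n → ℝ) :=
  {x | (∀ i ∈ A, x i = u i) ∧ ∀ j ∉ A, u j < x j}

/-- A persistence module over `ℝⁿ` (with the componentwise order) valued in
finite-dimensional `𝕜`-vector spaces: vector spaces `Vec u` and transition
maps `map : Vec u →ₗ Vec v` for `u ≼ v`, functorially. -/
structure PersistenceModule (n : ℕ) (𝕜 : Type) [Field 𝕜] where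
  Vec : (Fin n → ℝ) → Type
  [addCommGroup : ∀ u, AddCommGroup (Vec u)]
  [module : ∀ u, Module 𝕜 (Vec u)]
  [finiteDimensional : ∀ u, FiniteDimensional 𝕜 (Vec u)]
  map : ∀ {u v : Fin n → ℝ}, u ≤ v → (Vec u →ₗ[𝕜] Vec v)
  map_id : ∀ u : Fin n → ℝ, map (le_refl u) = LinearMap.id
  map_comp : ∀ {u v w : Fin n → ℝ} (h₁ : u ≤ v) (h₂ : v ≤ w),
    (map h₂).comp (map h₁) = map (h₁.trans h₂)

attribute [instance] PersistenceModule.addCommGroup PersistenceModule.module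
  PersistenceModule.finiteDimensional

/-- The rank invariant `ρ(u,v) = rank i^{u,v}` (by convention `0` if `u ≼ v`
fails). -/
noncomputable def rho {n : ℕ} {𝕜 : Type} [Field 𝕜] (M : PersistenceModule n 𝕜)
    (u v : Fin n → ℝ) : ℕ :=
  letI : Decidable (u ≤ v) := Classical.dec _
  if h : u ≤ v then Module.finrank 𝕜 (LinearMap.range (M.map h)) else 0

/-- Hypothesis (⋆) relative to a finite set `C̄ ⊆ ℝⁿ`: for all `u ≼ v`,
`ρ(u,v) = ρ(ū,v̄)` whenever `{c ∈ C̄ : c ≼ u}` is nonempty (`ū` denoting the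
greatest element of `{c ∈ C̄ : c ≼ u}`), and `ρ(u,v) = 0` otherwise. -/
def HypStar {n : ℕ} {𝕜 : Type} [Field 𝕜] (M : PersistenceModule n 𝕜)
    (Cbar : Finset (Fin n → ℝ)) : Prop :=
  ∀ u v : Fin n → ℝ, u ≤ v →
    (((∃ c ∈ Cbar, c ≤ u) →
      ∀ ub vb : Fin n → ℝ, IsGreatest {c | c ∈ Cbar ∧ c ≤ u} ub →
        IsGreatest {c | c ∈ Cbar ∧ c ≤ v} vb → rho M u v = rho M ub vb) ∧
      (¬ (∃ c ∈ Cbar, c ≤ u) → rho M u v = 0))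

lemma posline_eq_of_coord {n : ℕ} {L : Set (Fin n → ℝ)} (hL : PosLine L)
    {x y : Fin n → ℝ} (hx : x ∈ L) (hy : y ∈ L) (i₀ : Fin n)
    (h : x i₀ = y i₀) : x = y := by
  obtain ⟨u₀, m, hm, rfl⟩ := hL
  obtain ⟨t, rfl⟩ := hx
  obtain ⟨s, rfl⟩ := hy
  have : t = s := by
    have h' : u₀ i₀ + t * m i₀ = u₀ i₀ + s * m i₀ := by
      simpa [Pi.add_apply, Pi.smul_apply, smul_eq_mul] using h
    have := add_left_cancel h'
    exact mul_right_cancel₀ (ne_of_gt (hm i₀)) this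
  rw [this]

/-- let `𝕍` be a persistence module over `ℝⁿ` satisfying
hypothesis (⋆) with respect to `C̄`, and `L ∼_C̄ L'` equivalent lines with
positive slope. Then for all `u ≺ v` on `L` with `{c ∈ C̄ : c ≼ u}` nonempty,
`ρ(u, v) = ρ(push_{L'}(ū), push_{L'}(v̄))`. -/
theorem stmt_16 {n : ℕ} (hn : 0 < n) {𝕜 : Type} [Field 𝕜]
    (M : PersistenceModule n 𝕜)
    (Cbar : Finset (Fin n → ℝ)) (hCne : Cbar.Nonempty)
    (hclosed : ∀ a ∈ Cbar, ∀ b ∈ Cbar, a ⊔ b ∈ Cbar)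
    (hstar : HypStar M Cbar)
    (L L' : Set (Fin n → ℝ)) (hL : PosLine L) (hL' : PosLine L')
    (pushL pushL' : (Fin n → ℝ) → (Fin n → ℝ))
    (hpush : ∀ w : Fin n → ℝ, IsLeast {x | x ∈ L ∧ w ≤ x} (pushL w))
    (hpush' : ∀ w : Fin n → ℝ, IsLeast {x | x ∈ L' ∧ w ≤ x} (pushL' w))
    (AL AL' : (Fin n → ℝ) → Finset (Fin n))
    (hAL : ∀ w : Fin n → ℝ, (AL w).Nonempty ∧ pushL w ∈ SFace (AL w) w)
    (hAL' : ∀ w : Fin n → ℝ, (AL' w).Nonempty ∧ pushL' w ∈ SFace (AL' w) w)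
    (hequiv : ∀ c ∈ Cbar, AL c = AL' c)
    (u v : Fin n → ℝ) (huL : u ∈ L) (hvL : v ∈ L)
    (huv : ∀ i, u i < v i)
    (ubar vbar : Fin n → ℝ)
    (hubar : IsGreatest {c | c ∈ Cbar ∧ c ≤ u} ubar)
    (hvbar : IsGreatest {c | c ∈ Cbar ∧ c ≤ v} vbar) :
    rho M u v = rho M (pushL' ubar) (pushL' vbar) := by
  -- key lemma
  have hkey : ∀ (w b : Fin n → ℝ), w ∈ L →
      IsGreatest {c | c ∈ Cbar ∧ c ≤ w} b →
      IsGreatest {c | c ∈ Cbar ∧ c ≤ pushL' b} b := by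
    intro w b hwL hb
    obtain ⟨⟨hbC, hbw⟩, hbub⟩ := hb
    have hbp' : b ≤ pushL' b := (hpush' b).1.2
    refine ⟨⟨hbC, hbp'⟩, ?_⟩
    rintro c ⟨hcC, hcp⟩
    set d := b ⊔ c with hd
    have hdC : d ∈ Cbar := hclosed b hbC c hcC
    have hbd : b ≤ d := le_sup_left
    have hcd : c ≤ d := le_sup_right
    have hdp : d ≤ pushL' b := sup_le hbp' hcp
    have hpd_eq : pushL' d = pushL' b := by
      have h1 : pushL' d ≤ pushL' b := (hpush' d).2 ⟨(hpush' b).1.1, hdp⟩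
      have h2 : pushL' b ≤ pushL' d := (hpush' b).2 ⟨(hpush' d).1.1, hbd.trans (hpush' d).1.2⟩
      exact le_antisymm h1 h2
    obtain ⟨i₀, hi₀⟩ := (hAL' b).1
    have hbi : pushL' b i₀ = b i₀ := (hAL' b).2.1 i₀ hi₀
    have hdi : d i₀ = b i₀ := by
      have : c i₀ ≤ b i₀ := (hcp i₀).trans (le_of_eq hbi)
      simp [hd, this]
    have hi₀d' : i₀ ∈ AL' d := by
      by_contra hni
      have := (hAL' d).2.2 i₀ hni
      rw [hpd_eq, hbi, hdi] at this
      exact lt_irrefl _ this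
    have hi₀d : i₀ ∈ AL d := by rw [hequiv d hdC]; exact hi₀d'
    have hi₀b : i₀ ∈ AL b := by rw [hequiv b hbC]; exact hi₀
    have heqL : pushL d = pushL b := by
      apply posline_eq_of_coord hL (hpush d).1.1 (hpush b).1.1 i₀
      rw [(hAL d).2.1 i₀ hi₀d, (hAL b).2.1 i₀ hi₀b, hdi]
    have hpbw : pushL b ≤ w := (hpush b).2 ⟨hwL, hbw⟩
    have hcw : c ≤ w := hcd.trans (((hpush d).1.2).trans (heqL ▸ hpbw))
    exact hbub ⟨hcC, hcw⟩
  have huv' : u ≤ v := fun i => (huv i).le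
  have hubvb : ubar ≤ vbar := hvbar.2 ⟨hubar.1.1, hubar.1.2.trans huv'⟩
  have hpp : pushL' ubar ≤ pushL' vbar :=
    (hpush' ubar).2 ⟨(hpush' vbar).1.1, hubvb.trans (hpush' vbar).1.2⟩
  have hGu : IsGreatest {c | c ∈ Cbar ∧ c ≤ pushL' ubar} ubar := hkey u ubar huL hubar
  have hGv : IsGreatest {c | c ∈ Cbar ∧ c ≤ pushL' vbar} vbar := hkey v vbar hvL hvbar
  have e1 : rho M u v = rho M ubar vbar :=
    (hstar u v huv').1 ⟨ubar, hubar.1.1, hubar.1.2⟩ ubar vbar hubar hvbar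
  have e2 : rho M (pushL' ubar) (pushL' vbar) = rho M ubar vbar :=
    (hstar _ _ hpp).1 ⟨ubar, hGu.1.1, hGu.1.2⟩ ubar vbar hGu hGv
  rw [e1, e2]
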